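/- Let X be a compact Hausdorff space whose topology is generated by a topological preuniformity 𝒰 (a filter of entourages such that the balls U[x], U ∈ 𝒰, form a neighborhood base at every point). Then 𝒰 is locally uniform if and only if it is locally quasi-uniform. -/

import Mathlib

open UniformSpace in
/-- For a topological preuniformity (a filter `F` of entourages whose balls form
neighborhood bases) generating a compact Hausdorff topology, being locally uniform is
equivalent to being locally quasi-uniform. -/
theorem stmt_15 {X : Type*} [TopologicalSpace X] [CompactSpace X] [T2Space X]
    (F : Filter (X × X)) (hrefl : ∀ U ∈ F, SetRel.id ⊆ U)
    (htop : ∀ x : X, (∀ U ∈ F, ball x U ∈ nhds x) ∧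
      ∀ O ∈ nhds x, ∃ U ∈ F, ball x U ⊆ O) :
    ((∀ x : X, ∀ O ∈ nhds x, ∃ U ∈ F,
        ball x (SetRel.comp U (SetRel.comp (Prod.swap ⁻¹' U) U)) ⊆ O) ↔
      (∀ x : X, ∀ O ∈ nhds x, ∃ U ∈ F, ball x (SetRel.comp U U) ⊆ O)) := by
  classical
  constructor
  · -- locally uniform → locally quasi-uniform (easy, by reflexivity)
    intro h x O hO
    obtain ⟨U, hU, hb⟩ := h x O hO
    refine ⟨U, hU, fun w hw => hb ?_⟩
    obtain ⟨y, hxy, hyw⟩ := hw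
    exact ⟨y, hxy, y, show (y, y) ∈ U from hrefl U hU rfl, hyw⟩
  · -- locally quasi-uniform → locally uniform, using compactness + Hausdorff
    intro h x O hO
    by_contra hc
    push_neg at hc
    set ι := {s : Set (X × X) // s ∈ F} with hι
    haveI : Nonempty ι := ⟨⟨Set.univ, Filter.univ_mem⟩⟩
    have hsel : ∀ U : ι, ∃ y z w : X,
        (x, y) ∈ U.1 ∧ (z, y) ∈ U.1 ∧ (z, w) ∈ U.1 ∧ w ∉ O := by
      rintro ⟨U, hU⟩
      obtain ⟨w, hw, hwO⟩ := Set.not_subset.1 (hc U hU)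
      obtain ⟨y, hxy, z, hzy, hzw⟩ := hw
      exact ⟨y, z, w, hxy, hzy, hzw, hwO⟩
    choose y z w h1 h2 h3 h4 using hsel
    -- `y` tends to `x` along the net
    have hy : ∀ N ∈ nhds x, ∀ᶠ U : ι in Filter.atBot, y U ∈ N := by
      intro N hN
      obtain ⟨V, hV, hVN⟩ := (htop x).2 N hN
      filter_upwards [Filter.eventually_le_atBot (⟨V, hV⟩ : ι)] with U hUV
      exact hVN (hUV (h1 U))
    -- a cluster point of `z`
    haveI : IsDirected ι (· ≥ ·) :=
      ⟨fun a b => ⟨⟨a.1 ∩ b.1, Filter.inter_mem a.2 b.2⟩,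
        fun _ h => h.1, fun _ h => h.2⟩⟩
    haveI : (Filter.atBot : Filter ι).NeBot := Filter.atBot_neBot
    haveI : (Filter.map z (Filter.atBot : Filter ι)).NeBot := Filter.map_neBot
    obtain ⟨c, hcc⟩ := exists_clusterPt_of_compactSpace
      (Filter.map z (Filter.atBot : Filter ι))
    have hfz : ∀ N ∈ nhds c, ∃ᶠ U : ι in Filter.atBot, z U ∈ N :=
      mapClusterPt_iff_frequently.1 hcc
    -- the cluster point is `x`
    have hcx : c = x := by
      by_contra hne
      obtain ⟨u, v, hu, hv, hxu, hcv, huv⟩ := t2_separation (Ne.symm hne)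
      obtain ⟨V, hV, hVv⟩ := h c v (hv.mem_nhds hcv)
      have hb : ball c V ∈ nhds c := (htop c).1 V hV
      obtain ⟨U, hzU, hyU, hUV⟩ := ((hfz _ hb).and_eventually
        ((hy u (hu.mem_nhds hxu)).and
          (Filter.eventually_le_atBot (⟨V, hV⟩ : ι)))).exists
      have hyv : y U ∈ v := hVv ⟨z U, hzU, hUV (h2 U)⟩
      exact Set.disjoint_left.1 huv hyU hyv
    -- contradiction with `w U ∉ O`
    obtain ⟨V, hV, hVO⟩ := h x O hO
    have hb : ball x V ∈ nhds x := (htop x).1 V hV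
    have hfzx : ∃ᶠ U : ι in Filter.atBot, z U ∈ ball x V := hfz _ (hcx ▸ hb)
    obtain ⟨U, hzU, hUV⟩ :=
      (hfzx.and_eventually (Filter.eventually_le_atBot (⟨V, hV⟩ : ι))).exists
    exact h4 U (hVO ⟨z U, hzU, hUV (h3 U)⟩)
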